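/- Let b = 0 or 1, let G be a graph, and assume G is connected if b = 1. Then A^b_G, ordered by reverse inclusion, is a graded poset with rank function S ↦ g(G − S). -/

import Mathlib

/-!
Common framework: finite vertex-weighted multigraphs (loops and multiple edges
allowed), generalized orientations, divisors, contractions, and poset gadgets.

A graph is encoded by a finite set `V ⊆ ℕ` of vertices, a finite set `E ⊆ ℕ`
of edges, an "ends" function assigning to each edge its ordered pair of
end-vertices (the two components encode the two half-edges), and a weight
function `w : ℕ → ℕ`.

A generalized orientation is a function `ℕ → Option EdgeDir`, where `none`
means the edge is absent (an orientation on a spanning subgraph `G − S` takes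
the value `none` exactly on edges outside `E \ S`), `fwd`/`bwd` give the edge a
single direction, and `bi` makes the edge bioriented.
-/

open scoped Classical
open Finset

/-- Direction of an edge under a generalized orientation. -/
inductive EdgeDir : Type
  | fwd
  | bwd
  | bi
deriving DecidableEq

/-- Generalized orientation data. -/
abbrev Orient : Type := ℕ → Option EdgeDir

/-- The number of ending (target) half-edges at the vertex `v` of an edge with
end-pair `p`, given its direction `d`.  A one-way oriented edge has exactly
one target end; a bioriented edge has both ends as targets. -/
def dirT : Option EdgeDir → ℕ × ℕ → ℕ → ℕ
  | none, _, _ => 0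
  | some EdgeDir.fwd, p, v => if p.2 = v then 1 else 0
  | some EdgeDir.bwd, p, v => if p.1 = v then 1 else 0
  | some EdgeDir.bi, p, v => (if p.1 = v then 1 else 0) + (if p.2 = v then 1 else 0)

/-- Restriction of orientation data to the set `D` of kept edges. -/
def restr (O : Orient) (D : Finset ℕ) : Orient := fun e => if e ∈ D then O e else none

/-- A finite vertex-weighted multigraph. -/
structure WGraph : Type where
  V : Finset ℕ
  E : Finset ℕ
  ends : ℕ → ℕ × ℕ
  w : ℕ → ℕ
  ends_mem : ∀ e ∈ E, (ends e).1 ∈ V ∧ (ends e).2 ∈ V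

namespace WGraph

variable (G : WGraph)

/-- Edge set of the induced subgraph `(G−S)[Z]`: edges of `G − S` with both
ends in `Z`. -/
def indEdges (S Z : Finset ℕ) : Finset ℕ :=
  (G.E \ S).filter fun e => (G.ends e).1 ∈ Z ∧ (G.ends e).2 ∈ Z

/-- The cut `E(Z, Zᶜ)` in `G − S`: edges of `G − S` with exactly one end in `Z`. -/
def cutEdges (S Z : Finset ℕ) : Finset ℕ :=
  (G.E \ S).filter fun e =>
    ((G.ends e).1 ∈ Z ∧ (G.ends e).2 ∉ Z) ∨ ((G.ends e).1 ∉ Z ∧ (G.ends e).2 ∈ Z)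

/-- Adjacency via an edge belonging to `F ∩ E`. -/
def adjOn (F : Finset ℕ) (u v : ℕ) : Prop :=
  ∃ e ∈ F ∩ G.E, G.ends e = (u, v) ∨ G.ends e = (v, u)

/-- Number of connected components of the subgraph with vertex set `W` and
edge set `F`. -/
noncomputable def ncomp (W F : Finset ℕ) : ℕ :=
  Nat.card (Quot (fun u v : {x : ℕ // x ∈ W} => G.adjOn F u.1 v.1))

/-- The subgraph with vertex set `W` and edge set `F` is connected. -/
def ConnSub (W F : Finset ℕ) : Prop := G.ncomp W F = 1

/-- `G` is connected. -/
def Connected : Prop := G.ConnSub G.V G.E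

/-- Genus of the subgraph with vertex set `W` and edge set `F`:
`∑_{v ∈ W} w(v) − |W| + |F| + c`. -/
noncomputable def subGenus (W F : Finset ℕ) : ℤ :=
  (∑ v ∈ W, (G.w v : ℤ)) - (W.card : ℤ) + (((F ∩ G.E).card : ℤ)) + (G.ncomp W F : ℤ)

/-- The genus of `G`. -/
noncomputable def genus : ℤ := G.subGenus G.V G.E

/-- The degree of a vertex: the number of half-edges having `v` as end. -/
def deg (v : ℕ) : ℕ :=
  ∑ e ∈ G.E, ((if (G.ends e).1 = v then 1 else 0) + (if (G.ends e).2 = v then 1 else 0))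

/-- `e` is a bridge of `G − S`: removing it increases the number of connected
components. -/
def IsBridge (S : Finset ℕ) (e : ℕ) : Prop :=
  e ∈ G.E \ S ∧ G.ncomp G.V (G.E \ S) < G.ncomp G.V (G.E \ insert e S)

/-- The set of bridges of `G − S`. -/
noncomputable def bridges (S : Finset ℕ) : Finset ℕ := (G.E \ S).filter (G.IsBridge S)

/-- `T` is a cut of `G`, i.e. `T = E(Z, Zᶜ)` for some `∅ ⊊ Z ⊊ V`. -/
def IsCut (T : Finset ℕ) : Prop :=
  ∃ Z, Z ⊆ G.V ∧ Z.Nonempty ∧ Z ≠ G.V ∧ T = G.cutEdges ∅ Z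

/-- `W` is (the vertex set of) a connected component of `G − S`. -/
def IsCompOf (S W : Finset ℕ) : Prop :=
  W ⊆ G.V ∧ W.Nonempty ∧ G.ConnSub W (G.indEdges S W) ∧ G.cutEdges S W = ∅

/-- The poset `A^b_G`: for `b = 0` the sets `S ⊆ E` with `G − S` bridgeless,
for `b = 1` the sets `S ⊆ E` with `G − S` connected. -/
def Ab (b : ℕ) (S : Finset ℕ) : Prop :=
  S ⊆ G.E ∧ ((b = 0 ∧ ∀ e, ¬ G.IsBridge S e) ∨ (b = 1 ∧ G.ConnSub G.V (G.E \ S)))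

/-- `G` is a stable graph of genus `g`: connected, of genus `g`, and every
vertex of weight `0` has degree at least `3`. -/
noncomputable def Stable (g : ℕ) : Prop :=
  G.Connected ∧ G.genus = (g : ℤ) ∧ ∀ v ∈ G.V, G.w v = 0 → 3 ≤ G.deg v

/-! ### Generalized orientations on spanning subgraphs -/

/-- `O` is orientation data for the spanning subgraph `G − S` (it is defined
exactly on the edges of `G − S`). -/
def IsOrientOn (S : Finset ℕ) (O : Orient) : Prop :=
  ∀ e, O e ≠ none ↔ e ∈ G.E \ S

/-- The set of bioriented edges of `O`. -/
def biE (O : Orient) : Finset ℕ := G.E.filter fun e => O e = some EdgeDir.bi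

/-- `t^O_v`: the number of half-edges having `v` as target. -/
def tOr (O : Orient) (v : ℕ) : ℕ := ∑ e ∈ G.E, dirT (O e) (G.ends e) v

/-- `t^O(Z)`: the number of edges of `G − S` not contained in `(G−S)[Z]`
having a target in `Z`. -/
def tCut (S : Finset ℕ) (O : Orient) (Z : Finset ℕ) : ℕ :=
  ∑ e ∈ (G.E \ S) \ G.indEdges S Z, ∑ v ∈ Z, dirT (O e) (G.ends e) v

/-- The divisor `d^O` of a `b`-orientation `O` on `G − S`:
`d^O_v = w(v) − 1 + t^O_v` if `G − S` has edges, and `d^O_v = w(v) − 1 + b`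
otherwise; it is supported on `V`. -/
noncomputable def divOr (S : Finset ℕ) (b : ℕ) (O : Orient) : ℕ → ℤ :=
  fun v => if v ∈ G.V then
      (if G.E \ S = ∅ then (G.w v : ℤ) - 1 + (b : ℤ) else (G.w v : ℤ) - 1 + (G.tOr O v : ℤ))
    else 0

/-- Equivalence of generalized orientations on `G − S`:  both are orientations
on `G − S` and they have the same divisor. -/
noncomputable def equivOr (S : Finset ℕ) (b : ℕ) (O O' : Orient) : Prop :=
  G.IsOrientOn S O ∧ G.IsOrientOn S O' ∧ G.divOr S b O = G.divOr S b O'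

/-- `O` is a totally cyclic orientation on `G − S`: every nonempty cut
`E(Z,Zᶜ)` contains an edge with target in `Z` and an edge with target in `Zᶜ`. -/
def TotCyc (S : Finset ℕ) (O : Orient) : Prop :=
  ∀ Z : Finset ℕ, Z ⊆ G.V → Z.Nonempty → Z ≠ G.V → (G.cutEdges S Z).Nonempty →
    (∃ e ∈ G.cutEdges S Z, ∃ v ∈ Z, 0 < dirT (O e) (G.ends e) v) ∧
    (∃ e ∈ G.cutEdges S Z, ∃ v ∈ G.V \ Z, 0 < dirT (O e) (G.ends e) v)

/-- `O` is `e₀`-rooted on `G − S`: for every `Z ⊊ V` with `e₀` an edge of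
`(G−S)[Z]`, the cut `E(Z,Zᶜ)` contains an edge with target in `Zᶜ`. -/
def RootedAt (S : Finset ℕ) (O : Orient) (e₀ : ℕ) : Prop :=
  ∀ Z : Finset ℕ, Z ⊆ G.V → Z ≠ G.V → e₀ ∈ G.indEdges S Z →
    ∃ e ∈ G.cutEdges S Z, ∃ v ∈ G.V \ Z, 0 < dirT (O e) (G.ends e) v

/-- `O` is a rooted `1`-orientation on `G − S`:  it has exactly one bioriented
edge, at which it is rooted.  By convention, if `G − S` consists of a single
vertex (and no edges), the empty orientation is rooted. -/
def Rooted1 (S : Finset ℕ) (O : Orient) : Prop :=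
  (∃ e₀, G.biE O = {e₀} ∧ G.RootedAt S O e₀) ∨ (G.E \ S = ∅ ∧ G.V.card = 1)

/-- `O ∈ 𝒪^b(G−S)`:  for `b = 0`, a totally cyclic orientation on `G − S`;
for `b = 1`, a rooted `1`-orientation on `G − S`. -/
def MemOb (S : Finset ℕ) (b : ℕ) (O : Orient) : Prop :=
  G.IsOrientOn S O ∧
    ((b = 0 ∧ G.biE O = ∅ ∧ G.TotCyc S O) ∨ (b = 1 ∧ G.Rooted1 S O))

/-- `O` is a `b`-orientation on `G − S` (exactly `b` bioriented edges; by
convention the empty orientation on a one-vertex edgeless graph counts as a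
`1`-orientation). -/
def IsbOr (S : Finset ℕ) (b : ℕ) (O : Orient) : Prop :=
  G.IsOrientOn S O ∧
    ((G.biE O).card = b ∨ (G.E \ S = ∅ ∧ G.V.card = 1 ∧ b = 1))

/-! ### Posets of orientations on spanning subgraphs -/

/-- The order of `𝒪𝒫^b_G` on pairs `(S, O_S)`:  `(S,O_S) ≤ (T,O_T)` iff
`T ⊆ S` and the restriction of `O_T` to `G − S` is `O_S`. -/
def leOP (p q : Finset ℕ × Orient) : Prop :=
  q.1 ⊆ p.1 ∧ restr q.2 (G.E \ p.1) = p.2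

/-- The order of `𝒪̄𝒫^b_G` on pairs (representing classes): `(S,O̅_S) ≤ (T,O̅_T)`
iff `T ⊆ S` and some representative of `O̅_T` restricts on `G − S` to some
representative of `O̅_S`. -/
noncomputable def leOPbar (b : ℕ) (p q : Finset ℕ × Orient) : Prop :=
  q.1 ⊆ p.1 ∧ ∃ O', G.equivOr q.1 b O' q.2 ∧
    G.equivOr p.1 b (restr O' (G.E \ p.1)) p.2

/-- Equality in `𝒪̄𝒫^b_G`: same subgraph and equivalent orientations. -/
noncomputable def eqOP (b : ℕ) (p q : Finset ℕ × Orient) : Prop :=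
  p.1 = q.1 ∧ G.equivOr p.1 b p.2 q.2

/-- Membership in `𝒪𝒫^b_G`. -/
def POb (b : ℕ) (p : Finset ℕ × Orient) : Prop :=
  G.Ab b p.1 ∧ G.MemOb p.1 b p.2

/-! ### Stable divisors -/

/-- Stable divisors on `G − S` of degree `g(G−S) − c(G−S) + b` (`b = 0, 1`):
for `b = 1`, `G − S` is connected, the degree is `g(G−S)` and
`|d_Z| > g(Z) − 1` for every `Z ⊆ V`; for `b = 0`, the restriction of `d` to
every connected component `W` of `G − S` has degree `g(W) − 1` and satisfies
`|d_Z| > g(Z) − 1` for every `∅ ≠ Z ⊊ W`. -/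
noncomputable def StableDiv (S : Finset ℕ) (b : ℕ) (d : ℕ → ℤ) : Prop :=
  (∀ v, v ∉ G.V → d v = 0) ∧
  ((b = 1 ∧ G.ConnSub G.V (G.E \ S) ∧
      (∑ v ∈ G.V, d v) = G.subGenus G.V (G.E \ S) ∧
      ∀ Z ⊆ G.V, G.subGenus Z (G.indEdges S Z) - 1 < ∑ v ∈ Z, d v) ∨
   (b = 0 ∧ ∀ W, G.IsCompOf S W →
      (∑ v ∈ W, d v) = G.subGenus W (G.indEdges S W) - 1 ∧
      ∀ Z ⊆ W, Z.Nonempty → Z ≠ W →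
        G.subGenus Z (G.indEdges S Z) - 1 < ∑ v ∈ Z, d v))

/-! ### Contractions -/

/-- The relation identifying the two ends of each edge in `S₀`. -/
def conRel (S₀ : Finset ℕ) (u v : ℕ) : Prop :=
  ∃ e ∈ S₀ ∩ G.E, G.ends e = (u, v) ∨ G.ends e = (v, u)

/-- Representative (the least element) of the class of `v` under the
equivalence generated by identifying the ends of the edges in `S₀`. -/
noncomputable def crep (S₀ : Finset ℕ) (v : ℕ) : ℕ :=
  sInf {u | Relation.EqvGen (G.conRel S₀) u v}

/-- The (weighted) edge contraction `G/S₀`: every connected component of the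
subgraph spanned by `S₀` is contracted to a single vertex, whose weight is the
genus of that component; `E(G/S₀) = E(G) \ S₀`. -/
noncomputable def contract (S₀ : Finset ℕ) : WGraph where
  V := G.V.image (G.crep S₀)
  E := G.E \ S₀
  ends := fun e => (G.crep S₀ (G.ends e).1, G.crep S₀ (G.ends e).2)
  w := fun v =>
    (G.subGenus (G.V.filter fun u => G.crep S₀ u = v)
      (G.indEdges (G.E \ S₀) (G.V.filter fun u => G.crep S₀ u = v))).toNat
  ends_mem := by
    intro e he
    rw [Finset.mem_sdiff] at he
    exact ⟨Finset.mem_image_of_mem _ (G.ends_mem e he.1).1,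
           Finset.mem_image_of_mem _ (G.ends_mem e he.1).2⟩

/-- Deletion of the edges in `T` (a spanning subgraph, as a graph). -/
def ddel (T : Finset ℕ) : WGraph where
  V := G.V
  E := G.E \ T
  ends := G.ends
  w := G.w
  ends_mem := fun e he => G.ends_mem e (Finset.mem_sdiff.mp he).1

/-- Pullback `γ* T` of an edge set along the contraction `γ : G → G/S₀`:
`T ∪ (G−T)_br` for `b = 0`, and `T` for `b = 1`. -/
noncomputable def pullStar (b : ℕ) (T : Finset ℕ) : Finset ℕ :=
  if b = 0 then T ∪ G.bridges T else T

/-- Pushforward of a divisor along the contraction `γ : G → G/S₀`: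
`(γ_* d)_v = ∑_{z ∈ γ⁻¹(v)} d_z`. -/
noncomputable def pushDiv (S₀ : Finset ℕ) (d : ℕ → ℤ) : ℕ → ℤ :=
  fun v => ∑ z ∈ G.V.filter (fun u => G.crep S₀ u = v), d z

/-- The divisor `c^{γ,S}` on `G/S₀`: `c^{γ,S}_v = #{e ∈ S₀ ∩ S : γ(e) = v}`. -/
noncomputable def cGamma (S₀ S : Finset ℕ) : ℕ → ℤ :=
  fun v => ((((S₀ ∩ S) ∩ G.E).filter (fun e => G.crep S₀ (G.ends e).1 = v)).card : ℤ)

/-- The relation "`q` is a value of `γ̄_*` at `p`" for the contraction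
`γ : G → G/S₀` acting on classes of orientations: `q` is the restriction to
`(G/S₀) − γ_* S` of a representative of the class of `p` having no bioriented
edge in `S₀` (when `(G/S₀) − γ_*S` has no edges, any representative serves). -/
noncomputable def pushRel (S₀ : Finset ℕ) (b : ℕ) (p q : Finset ℕ × Orient) : Prop :=
  ∃ O', G.equivOr p.1 b O' p.2 ∧
    ((∀ e ∈ S₀, O' e ≠ some EdgeDir.bi) ∨ G.E \ (S₀ ∪ p.1) = ∅) ∧
    q.1 = p.1 \ S₀ ∧ q.2 = restr O' (G.E \ (S₀ ∪ p.1))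

/-! ### Isomorphisms and directed reachability -/

/-- `(fV, fE)` is an isomorphism from `G` to `H`. -/
def IsoMaps (H : WGraph) (fV fE : ℕ → ℕ) : Prop :=
  Set.BijOn fV ↑G.V ↑H.V ∧ Set.BijOn fE ↑G.E ↑H.E ∧
  (∀ e ∈ G.E, H.ends (fE e) = (fV (G.ends e).1, fV (G.ends e).2) ∨
              H.ends (fE e) = (fV (G.ends e).2, fV (G.ends e).1)) ∧
  (∀ v ∈ G.V, H.w (fV v) = G.w v)

/-- `G` and `H` are isomorphic graphs. -/
def Iso (H : WGraph) : Prop := ∃ fV fE, G.IsoMaps H fV fE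

/-- The edge-contraction relation: `G ≤ H` iff `H = G/S₀` (up to isomorphism)
for some `S₀ ⊆ E(G)`. -/
noncomputable def contractLE (H : WGraph) : Prop :=
  ∃ S₀ ⊆ G.E, (G.contract S₀).Iso H

/-- One step from `u` to `v` along an `O`-directed edge (a bioriented edge may
be traversed in both directions). -/
def dirStep (O : Orient) (u v : ℕ) : Prop :=
  ∃ e ∈ G.E,
    (O e = some EdgeDir.fwd ∧ G.ends e = (u, v)) ∨
    (O e = some EdgeDir.bwd ∧ G.ends e = (v, u)) ∨
    (O e = some EdgeDir.bi ∧ (G.ends e = (u, v) ∨ G.ends e = (v, u)))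

/-- There is an `O`-directed path from the (bioriented) edge `e` to the
vertex `v`: a directed path starting at one of the ends of `e` and ending
at `v`. -/
def dirReachFromEdge (O : Orient) (e v : ℕ) : Prop :=
  ∃ u, ((G.ends e).1 = u ∨ (G.ends e).2 = u) ∧
    Relation.ReflTransGen (G.dirStep O) u v

end WGraph

/-! ### Generic poset gadgets (for sets with an order, modulo an equivalence) -/

/-- `le` is a partial order on `{a | P a}` modulo the identification `eqv`. -/
def IsPartialOrderOnMod {α : Type*} (P : α → Prop) (eqv le : α → α → Prop) : Prop :=
  (∀ a, P a → le a a) ∧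
  (∀ a b c, P a → P b → P c → le a b → le b c → le a c) ∧
  (∀ a b, P a → P b → le a b → le b a → eqv a b)

/-- `le` is a partial order on `{a | P a}`. -/
def IsPartialOrderOn {α : Type*} (P : α → Prop) (le : α → α → Prop) : Prop :=
  IsPartialOrderOnMod P (· = ·) le

/-- `a'` covers `a` in `{a | P a}` ordered by `le`, modulo `eqv`. -/
def CoversOnMod {α : Type*} (P : α → Prop) (eqv le : α → α → Prop) (a a' : α) : Prop :=
  P a ∧ P a' ∧ le a a' ∧ ¬ eqv a a' ∧
    ∀ c, P c → le a c → le c a' → (eqv c a ∨ eqv c a')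

/-- `ρ` is a rank on `{a | P a}` ordered by `le`, modulo `eqv`:  along every
covering relation it increases by exactly `1`. -/
def IsRankOnMod {α : Type*} (P : α → Prop) (eqv le : α → α → Prop) (ρ : α → ℕ) : Prop :=
  ∀ a a', CoversOnMod P eqv le a a' → ρ a' = ρ a + 1

/-- `a'` covers `a` in `{a | P a}` ordered by `le`. -/
def CoversOn {α : Type*} (P : α → Prop) (le : α → α → Prop) : α → α → Prop :=
  CoversOnMod P (· = ·) le

/-- `ρ` is a rank on `{a | P a}` ordered by `le`. -/
def IsRankOn {α : Type*} (P : α → Prop) (le : α → α → Prop) (ρ : α → ℕ) : Prop :=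
  IsRankOnMod P (· = ·) le ρ

/-- `f` is a quotient of posets from `({a | P a}, lea)` onto `({b | Q b}, leb)`:
an order-preserving surjection such that any relation downstairs lifts to a
relation upstairs. -/
def IsPosetQuotient {α β : Type*} (P : α → Prop) (Q : β → Prop)
    (lea : α → α → Prop) (leb : β → β → Prop) (f : α → β) : Prop :=
  (∀ a, P a → Q (f a)) ∧
  (∀ a a', P a → P a' → lea a a' → leb (f a) (f a')) ∧
  (∀ b, Q b → ∃ a, P a ∧ f a = b) ∧
  (∀ b b', Q b → Q b' → leb b b' →
    ∃ a a', P a ∧ P a' ∧ f a = b ∧ f a' = b' ∧ lea a a')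

/-! ### Structures over the moduli of stable graphs -/

/-- Pairs `(G, S)` with `G` stable of genus `g` and `S ∈ A^b_G`. -/
noncomputable def PairStab (g b : ℕ) (p : WGraph × Finset ℕ) : Prop :=
  p.1.Stable g ∧ p.1.Ab b p.2

/-- Isomorphism of pairs `(G, S)`. -/
def PairIso (p q : WGraph × Finset ℕ) : Prop :=
  ∃ fV fE, p.1.IsoMaps q.1 fV fE ∧ p.2.image fE = q.2

/-- The order on `A^b_g`: `(G,S) ≤ (H,T)` iff there is a contraction
`γ : G → H` (a contraction of `G` followed by an isomorphism onto `H`) with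
`γ* T ⊆ S`. -/
noncomputable def AgLE (b : ℕ) (p q : WGraph × Finset ℕ) : Prop :=
  ∃ S₀ ⊆ p.1.E, ∃ fV fE, (p.1.contract S₀).IsoMaps q.1 fV fE ∧
    p.1.pullStar b (((p.1.contract S₀).E).filter fun e => fE e ∈ q.2) ⊆ p.2

/-- Triples `(G, S, O̅_S)` with `G` stable of genus `g`, `S ∈ A^b_G` and
`O_S ∈ 𝒪^b(G−S)` (representing elements of `𝒪̄𝒫^b_g`). -/
noncomputable def TripP (g b : ℕ) (x : WGraph × Finset ℕ × Orient) : Prop :=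
  x.1.Stable g ∧ x.1.Ab b x.2.1 ∧ x.1.MemOb x.2.1 b x.2.2

/-- Identification of triples: an isomorphism of the underlying graphs
carrying the subgraph and the class of the orientation (i.e. its divisor) of
one to the other. -/
noncomputable def TripEq (b : ℕ) (x y : WGraph × Finset ℕ × Orient) : Prop :=
  ∃ fV fE, x.1.IsoMaps y.1 fV fE ∧ x.2.1.image fE = y.2.1 ∧
    ∀ v ∈ x.1.V, y.1.divOr y.2.1 b y.2.2 (fV v) = x.1.divOr x.2.1 b x.2.2 v

/-- The order on `𝒪̄𝒫^b_g`: `(G, O̅_S) ≤ (H, O̅_T)` iff there is a contraction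
`γ : G → H` with `γ* T ⊆ S` and `γ̄_* O̅_S ≤ O̅_T`, the latter meaning that the
restriction of `O̅_T` to `H − γ_* S` equals `γ̄_* O̅_S` (compared through the
isomorphism, via the divisors). -/
noncomputable def OPgLE (b : ℕ) (x y : WGraph × Finset ℕ × Orient) : Prop :=
  ∃ S₀ ⊆ x.1.E, ∃ fV fE, (x.1.contract S₀).IsoMaps y.1 fV fE ∧
    x.1.pullStar b (((x.1.contract S₀).E).filter fun e => fE e ∈ y.2.1) ⊆ x.2.1 ∧
    ∃ O', x.1.equivOr x.2.1 b O' x.2.2 ∧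
      ((∀ e ∈ S₀, O' e ≠ some EdgeDir.bi) ∨ x.1.E \ (S₀ ∪ x.2.1) = ∅) ∧
      ∀ v ∈ (x.1.contract S₀).V,
        y.1.divOr ((x.2.1 \ S₀).image fE) b
            (restr y.2.2 (y.1.E \ (x.2.1 \ S₀).image fE)) (fV v)
          = (x.1.contract S₀).divOr (x.2.1 \ S₀) b
              (restr O' (x.1.E \ (S₀ ∪ x.2.1))) v


section AbGradedInfra

open Relation

variable (G : WGraph)

/-- Adjacency relation on vertices of `G` (as a subtype), via edges in `F`. -/
def GRel (F : Finset ℕ) : {x : ℕ // x ∈ G.V} → {x : ℕ // x ∈ G.V} → Prop :=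
  fun u v => G.adjOn F u.1 v.1

lemma gncomp_eq (F : Finset ℕ) :
    G.ncomp G.V F = Nat.card (Quot (GRel G F)) := rfl

lemma grel_mono {F F' : Finset ℕ} (h : F ⊆ F') {u v} (huv : GRel G F u v) :
    GRel G F' u v := by
  obtain ⟨e, he, h2⟩ := huv
  rw [Finset.mem_inter] at he
  exact ⟨e, Finset.mem_inter.2 ⟨h he.1, he.2⟩, h2⟩

lemma gconn_mono {F F' : Finset ℕ} (h : F ⊆ F') {u v}
    (huv : EqvGen (GRel G F) u v) : EqvGen (GRel G F') u v :=
  Relation.EqvGen.mono (fun a b hab => grel_mono G h hab) _ _ huv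

lemma quot_card_eq {α : Type*} (r s : α → α → Prop)
    (hrs : ∀ a b, r a b → EqvGen s a b) (hsr : ∀ a b, s a b → EqvGen r a b) :
    Nat.card (Quot r) = Nat.card (Quot s) := by
  refine Nat.card_congr
    ⟨Quot.lift (fun a => Quot.mk s a) (fun a b h => Quot.eqvGen_sound (hrs a b h)),
     Quot.lift (fun a => Quot.mk r a) (fun a b h => Quot.eqvGen_sound (hsr a b h)), ?_, ?_⟩
  · intro q; induction q using Quot.ind; rfl
  · intro q; induction q using Quot.ind; rfl

/-- Decomposition of connectivity after adding one edge. -/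
lemma gconn_insert_cases (F : Finset ℕ) (e : ℕ) (p q : {x : ℕ // x ∈ G.V})
    (hpq : G.ends e = (p.1, q.1)) {a b : {x : ℕ // x ∈ G.V}}
    (h : EqvGen (GRel G (insert e F)) a b) :
    EqvGen (GRel G F) a b ∨
      (EqvGen (GRel G F) a p ∧ EqvGen (GRel G F) q b) ∨
      (EqvGen (GRel G F) a q ∧ EqvGen (GRel G F) p b) := by
  induction h with
  | rel x y hxy =>
    obtain ⟨f, hf, hends⟩ := hxy
    rw [Finset.mem_inter, Finset.mem_insert] at hf
    rcases hf.1 with rfl | hfF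
    · rcases hends with h1 | h1 <;> rw [hpq] at h1
      · injection h1 with h2 h3
        obtain rfl : x = p := Subtype.ext h2.symm
        obtain rfl : y = q := Subtype.ext h3.symm
        exact Or.inr (Or.inl ⟨EqvGen.refl x, EqvGen.refl y⟩)
      · injection h1 with h2 h3
        obtain rfl : y = p := Subtype.ext h2.symm
        obtain rfl : x = q := Subtype.ext h3.symm
        exact Or.inr (Or.inr ⟨EqvGen.refl x, EqvGen.refl y⟩)
    · exact Or.inl (EqvGen.rel _ _ ⟨f, Finset.mem_inter.2 ⟨hfF, hf.2⟩, hends⟩)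
  | refl x => exact Or.inl (EqvGen.refl x)
  | symm x y _ ih =>
    rcases ih with h1 | ⟨h1, h2⟩ | ⟨h1, h2⟩
    · exact Or.inl (EqvGen.symm _ _ h1)
    · exact Or.inr (Or.inr ⟨EqvGen.symm _ _ h2, EqvGen.symm _ _ h1⟩)
    · exact Or.inr (Or.inl ⟨EqvGen.symm _ _ h2, EqvGen.symm _ _ h1⟩)
  | trans x y z _ _ ih1 ih2 =>
    rcases ih1 with h1 | ⟨h1, h2⟩ | ⟨h1, h2⟩ <;>
      rcases ih2 with g1 | ⟨g1, g2⟩ | ⟨g1, g2⟩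
    · exact Or.inl (EqvGen.trans _ _ _ h1 g1)
    · exact Or.inr (Or.inl ⟨EqvGen.trans _ _ _ h1 g1, g2⟩)
    · exact Or.inr (Or.inr ⟨EqvGen.trans _ _ _ h1 g1, g2⟩)
    · exact Or.inr (Or.inl ⟨h1, EqvGen.trans _ _ _ h2 g1⟩)
    · exact Or.inr (Or.inl ⟨h1, g2⟩)
    · exact Or.inl (EqvGen.trans _ _ _ h1 g2)
    · exact Or.inr (Or.inr ⟨h1, EqvGen.trans _ _ _ h2 g1⟩)
    · exact Or.inl (EqvGen.trans _ _ _ h1 g2)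
    · exact Or.inr (Or.inr ⟨h1, g2⟩)

lemma gconn_insert_iff (F : Finset ℕ) (e : ℕ) (p q : {x : ℕ // x ∈ G.V})
    (hpq : G.ends e = (p.1, q.1)) (hconn : EqvGen (GRel G F) p q)
    (a b : {x : ℕ // x ∈ G.V}) :
    EqvGen (GRel G (insert e F)) a b ↔ EqvGen (GRel G F) a b := by
  constructor
  · intro h
    rcases gconn_insert_cases G F e p q hpq h with h1 | ⟨h1, h2⟩ | ⟨h1, h2⟩
    · exact h1
    · exact EqvGen.trans _ _ _ (EqvGen.trans _ _ _ h1 hconn) h2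
    · exact EqvGen.trans _ _ _ (EqvGen.trans _ _ _ h1 (EqvGen.symm _ _ hconn)) h2
  · exact gconn_mono G (Finset.subset_insert e F)

lemma gncomp_insert_of_conn (F : Finset ℕ) (e : ℕ) (p q : {x : ℕ // x ∈ G.V})
    (hpq : G.ends e = (p.1, q.1)) (hconn : EqvGen (GRel G F) p q) :
    G.ncomp G.V (insert e F) = G.ncomp G.V F := by
  rw [gncomp_eq, gncomp_eq]
  exact quot_card_eq _ _
    (fun a b h => (gconn_insert_iff G F e p q hpq hconn a b).1 (EqvGen.rel a b h))
    (fun a b h => EqvGen.rel a b (grel_mono G (Finset.subset_insert e F) h))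

lemma gncomp_mono {F F' : Finset ℕ} (h : F ⊆ F') :
    G.ncomp G.V F' ≤ G.ncomp G.V F := by
  rw [gncomp_eq, gncomp_eq]
  refine Nat.card_le_card_of_surjective
    (Quot.map id (fun a b hab => grel_mono G h hab)) ?_
  intro c
  induction c using Quot.ind with
  | _ a => exact ⟨Quot.mk _ a, rfl⟩

lemma card_ne_eq {α : Type*} [Finite α] (y : α) :
    Nat.card {A : α // A ≠ y} = Nat.card α - 1 := by
  have := Fintype.ofFinite α
  classical
  simp [Nat.card_eq_fintype_card, Fintype.card_subtype_compl]

lemma gncomp_insert_of_not_conn (F : Finset ℕ) {e : ℕ} (he : e ∈ G.E)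
    (p q : {x : ℕ // x ∈ G.V}) (hpq : G.ends e = (p.1, q.1))
    (h : ¬ EqvGen (GRel G F) p q) :
    G.ncomp G.V F = G.ncomp G.V (insert e F) + 1 := by
  classical
  rw [gncomp_eq, gncomp_eq]
  set r := GRel G F with hr
  set r' := GRel G (insert e F) with hr'
  have hmap : ∀ a b, r a b → r' a b := fun a b => grel_mono G (Finset.subset_insert e F)
  set φ : Quot r → Quot r' := Quot.map id hmap with hφ
  set y0 : Quot r := Quot.mk r q with hy0
  have hkey : ∀ A B : Quot r, φ A = φ B → A = B ∨ B = y0 ∨ A = y0 := by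
    intro A B
    induction A using Quot.ind with | _ a =>
    induction B using Quot.ind with | _ b =>
    intro hAB
    have hAB' : EqvGen r' a b := Quot.eq.1 hAB
    rcases gconn_insert_cases G F e p q hpq hAB' with h1 | ⟨h1, h2⟩ | ⟨h1, h2⟩
    · exact Or.inl (Quot.eqvGen_sound h1)
    · exact Or.inr (Or.inl (Quot.eqvGen_sound (EqvGen.symm _ _ h2)))
    · exact Or.inr (Or.inr (Quot.eqvGen_sound h1))
  have hsurj : ∀ C : Quot r', ∃ A : Quot r, A ≠ y0 ∧ φ A = C := by
    intro C
    induction C using Quot.ind with | _ c =>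
    by_cases hc : Quot.mk r c = y0
    · refine ⟨Quot.mk r p, fun hpy => h (Quot.eq.1 hpy), ?_⟩
      have h1 : EqvGen r c q := Quot.eq.1 hc
      have h2 : EqvGen r' p q := EqvGen.rel _ _
        ⟨e, Finset.mem_inter.2 ⟨Finset.mem_insert_self e F, he⟩, Or.inl hpq⟩
      have h3 : EqvGen r' p c :=
        EqvGen.trans _ _ _ h2 (EqvGen.symm _ _ (Relation.EqvGen.mono hmap _ _ h1))
      exact Quot.eqvGen_sound (EqvGen.symm _ _ h3) ▸ rfl
    · exact ⟨Quot.mk r c, hc, rfl⟩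
  have hbij : Function.Bijective (fun A : {A : Quot r // A ≠ y0} => φ A.1) := by
    constructor
    · rintro ⟨A, hA⟩ ⟨B, hB⟩ hAB
      rcases hkey A B hAB with h1 | h1 | h1
      · exact Subtype.ext h1
      · exact absurd h1 hB
      · exact absurd h1 hA
    · intro C
      obtain ⟨A, hA, hAC⟩ := hsurj C
      exact ⟨⟨A, hA⟩, hAC⟩
  have h1 : Nat.card (Quot r') = Nat.card {A : Quot r // A ≠ y0} :=
    (Nat.card_congr (Equiv.ofBijective _ hbij)).symm
  have h2 : Nat.card {A : Quot r // A ≠ y0} = Nat.card (Quot r) - 1 := card_ne_eq y0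
  haveI : Nonempty (Quot r) := ⟨Quot.mk r q⟩
  have h3 : 0 < Nat.card (Quot r) := Nat.card_pos (α := Quot r)
  omega

lemma gncomp_nil (F : Finset ℕ) (h : F ∩ G.E = ∅) : G.ncomp G.V F = G.V.card := by
  rw [gncomp_eq]
  have hinj : Function.Injective (Quot.mk (GRel G F)) := by
    intro a b hab
    have h1 : EqvGen (GRel G F) a b := Quot.eq.1 hab
    clear hab
    induction h1 with
    | rel x y hxy =>
      obtain ⟨f, hf, _⟩ := hxy
      rw [h] at hf
      exact absurd hf (Finset.notMem_empty f)
    | refl x => rfl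
    | symm x y _ ih => exact ih.symm
    | trans x y z _ _ ih1 ih2 => exact ih1.trans ih2
  rw [(Nat.card_congr (Equiv.ofBijective _ ⟨hinj, Quot.mk_surjective⟩)).symm]
  exact Nat.card_eq_finsetCard G.V

lemma gncomp_card_lb : ∀ F : Finset ℕ, F ⊆ G.E → G.V.card ≤ G.ncomp G.V F + F.card := by
  intro F
  induction F using Finset.induction_on with
  | empty =>
    intro _
    rw [gncomp_nil G ∅ (by simp)]
    simp
  | @insert f F hf ih =>
    intro hsub
    have hfE : f ∈ G.E := hsub (Finset.mem_insert_self _ _)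
    have hFE : F ⊆ G.E := (Finset.subset_insert f F).trans hsub
    obtain ⟨hp, hq⟩ := G.ends_mem f hfE
    have hle := ih hFE
    rw [Finset.card_insert_of_notMem hf]
    by_cases hc : EqvGen (GRel G F) ⟨(G.ends f).1, hp⟩ ⟨(G.ends f).2, hq⟩
    · rw [gncomp_insert_of_conn G F f ⟨(G.ends f).1, hp⟩ ⟨(G.ends f).2, hq⟩ rfl hc]
      omega
    · have h1 := gncomp_insert_of_not_conn G F hfE ⟨(G.ends f).1, hp⟩ ⟨(G.ends f).2, hq⟩ rfl hc
      omega

lemma subGenus_sdiff (S : Finset ℕ) :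
    G.subGenus G.V (G.E \ S) =
      (∑ v ∈ G.V, (G.w v : ℤ)) - (G.V.card : ℤ) + ((G.E \ S).card : ℤ)
        + (G.ncomp G.V (G.E \ S) : ℤ) := by
  unfold WGraph.subGenus
  rw [Finset.inter_eq_left.2 Finset.sdiff_subset]

lemma subGenus_sdiff_nonneg (S : Finset ℕ) : 0 ≤ G.subGenus G.V (G.E \ S) := by
  rw [subGenus_sdiff]
  have h1 := gncomp_card_lb G (G.E \ S) Finset.sdiff_subset
  have h1' : (G.V.card : ℤ) ≤ (G.ncomp G.V (G.E \ S) : ℤ) + ((G.E \ S).card : ℤ) := by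
    exact_mod_cast h1
  have h2 : (0:ℤ) ≤ ∑ v ∈ G.V, (G.w v : ℤ) :=
    Finset.sum_nonneg fun v _ => Int.natCast_nonneg _
  linarith

lemma conn_of_not_bridge (S : Finset ℕ) {e : ℕ} (he : e ∈ G.E \ S)
    (hnb : ¬ G.IsBridge S e) (p q : {x : ℕ // x ∈ G.V}) (hpq : G.ends e = (p.1, q.1)) :
    EqvGen (GRel G ((G.E \ S).erase e)) p q := by
  by_contra hc
  apply hnb
  refine ⟨he, ?_⟩
  have heE : e ∈ G.E := (Finset.mem_sdiff.1 he).1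
  have h1 : insert e ((G.E \ S).erase e) = G.E \ S := Finset.insert_erase he
  have h2 := gncomp_insert_of_not_conn G ((G.E \ S).erase e) heE p q hpq hc
  rw [h1] at h2
  have h3 : G.E \ insert e S = (G.E \ S).erase e := by
    ext x
    simp only [Finset.mem_sdiff, Finset.mem_insert, Finset.mem_erase]
    tauto
  rw [h3]
  omega

lemma gncomp_union_chain : ∀ (D₁ : Finset ℕ) (F : Finset ℕ), D₁ ⊆ G.E →
    (∀ f ∈ D₁, ∀ (hp : (G.ends f).1 ∈ G.V) (hq : (G.ends f).2 ∈ G.V),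
      ¬ EqvGen (GRel G (F ∪ D₁.erase f)) ⟨(G.ends f).1, hp⟩ ⟨(G.ends f).2, hq⟩) →
    G.ncomp G.V (F ∪ D₁) + D₁.card = G.ncomp G.V F := by
  intro D₁
  induction D₁ using Finset.induction_on with
  | empty => intro F _ _; simp
  | @insert f D₁ hf ih =>
    intro F hsub hbr
    have hfE : f ∈ G.E := hsub (Finset.mem_insert_self _ _)
    obtain ⟨hp, hq⟩ := G.ends_mem f hfE
    have hfe : (insert f D₁).erase f = D₁ := Finset.erase_insert hf
    have hbrf := hbr f (Finset.mem_insert_self _ _) hp hq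
    rw [hfe] at hbrf
    have h4 : F ∪ insert f D₁ = insert f (F ∪ D₁) := Finset.union_insert f F D₁
    have h5 := gncomp_insert_of_not_conn G (F ∪ D₁) hfE
      ⟨(G.ends f).1, hp⟩ ⟨(G.ends f).2, hq⟩ rfl hbrf
    have h6 := ih F ((Finset.subset_insert f D₁).trans hsub) (fun g hg hgp hgq hcon => by
      refine hbr g (Finset.mem_insert_of_mem hg) hgp hgq ?_
      refine gconn_mono G ?_ hcon
      exact Finset.union_subset_union_right (Finset.erase_subset_erase g (Finset.subset_insert f D₁)))
    rw [h4, Finset.card_insert_of_notMem hf]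
    omega

/-- Main step: between strictly nested elements of `A^b_G` there is an
intermediate one whose genus is one more than that of the bigger removed set. -/
lemma exists_step (b : ℕ) (hb : b = 0 ∨ b = 1) (a a' : Finset ℕ)
    (ha : G.Ab b a) (ha' : G.Ab b a') (hsub : a' ⊆ a) (hne : a' ≠ a) :
    ∃ c, G.Ab b c ∧ a' ⊆ c ∧ c ⊆ a ∧ c ≠ a ∧
      G.subGenus G.V (G.E \ c) = G.subGenus G.V (G.E \ a) + 1 := by
  classical
  have haE : a ⊆ G.E := ha.1
  have ha'E : a' ⊆ G.E := ha'.1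
  obtain ⟨e₁, he₁a, he₁a'⟩ : ∃ e₁ ∈ a, e₁ ∉ a' := by
    by_contra hcon
    push_neg at hcon
    exact hne (Finset.Subset.antisymm hcon hsub).symm
  have he₁E : e₁ ∈ G.E := haE he₁a
  obtain ⟨hp₁, hq₁⟩ := G.ends_mem e₁ he₁E
  set P : {x : ℕ // x ∈ G.V} := ⟨(G.ends e₁).1, hp₁⟩ with hP
  set Q : {x : ℕ // x ∈ G.V} := ⟨(G.ends e₁).2, hq₁⟩ with hQ
  set F : Finset ℕ := G.E \ a with hF
  have he₁F : e₁ ∉ F := by simp [hF, he₁a]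
  rcases hb with rfl | rfl
  · -- b = 0 : bridgeless case
    have hbr : ∀ e, ¬ G.IsBridge a e := by
      rcases ha.2 with ⟨_, h⟩ | ⟨h, _⟩
      · exact h
      · exact absurd h one_ne_zero.symm
    have hbr' : ∀ e, ¬ G.IsBridge a' e := by
      rcases ha'.2 with ⟨_, h⟩ | ⟨h, _⟩
      · exact h
      · exact absurd h one_ne_zero.symm
    set D : Finset ℕ := a \ a' with hD
    -- step 1 : ends of `e₁` are connected in `(G − a') − e₁`
    have hconn1 : EqvGen (GRel G ((G.E \ a').erase e₁)) P Q :=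
      conn_of_not_bridge G a' (Finset.mem_sdiff.2 ⟨he₁E, he₁a'⟩) (hbr' e₁) P Q rfl
    have hsub1 : (G.E \ a').erase e₁ ⊆ F ∪ D.erase e₁ := by
      intro x hx
      rw [Finset.mem_erase, Finset.mem_sdiff] at hx
      rw [Finset.mem_union, Finset.mem_erase, Finset.mem_sdiff, Finset.mem_sdiff]
      by_cases hxa : x ∈ a
      · exact Or.inr ⟨hx.1, hxa, hx.2.2⟩
      · exact Or.inl ⟨hx.2.1, hxa⟩
    have hconn2 : EqvGen (GRel G (F ∪ D.erase e₁)) P Q := gconn_mono G hsub1 hconn1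
    -- step 2 : a minimal connecting set `D₁ ⊆ D \ {e₁}`
    set 𝒮 : Finset (Finset ℕ) :=
      (D.erase e₁).powerset.filter (fun D' => EqvGen (GRel G (F ∪ D')) P Q) with h𝒮
    have h𝒮ne : 𝒮.Nonempty :=
      ⟨D.erase e₁, Finset.mem_filter.2 ⟨Finset.mem_powerset.2 (Finset.Subset.refl _), hconn2⟩⟩
    obtain ⟨D₁, hD₁mem, hD₁min⟩ := Finset.exists_min_image 𝒮 Finset.card h𝒮ne
    rw [h𝒮, Finset.mem_filter, Finset.mem_powerset] at hD₁mem
    obtain ⟨hD₁sub, hD₁conn⟩ := hD₁mem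
    have hD₁minimal : ∀ f ∈ D₁, ¬ EqvGen (GRel G (F ∪ D₁.erase f)) P Q := by
      intro f hfD₁ hcon
      have hmem : D₁.erase f ∈ 𝒮 := Finset.mem_filter.2
        ⟨Finset.mem_powerset.2 ((Finset.erase_subset f D₁).trans hD₁sub), hcon⟩
      have := hD₁min _ hmem
      have hlt : (D₁.erase f).card < D₁.card := Finset.card_erase_lt_of_mem hfD₁
      omega
    have hD₁D : D₁ ⊆ D := hD₁sub.trans (Finset.erase_subset e₁ D)
    have hD₁a : D₁ ⊆ a := hD₁D.trans (Finset.sdiff_subset)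
    have hD₁E : D₁ ⊆ G.E := hD₁a.trans haE
    have he₁D₁ : e₁ ∉ D₁ := fun h => (Finset.mem_erase.1 (hD₁sub h)).1 rfl
    have hD₁F : ∀ f ∈ D₁, f ∉ F := fun f hf h => (Finset.mem_sdiff.1 h).2 (hD₁a hf)
    -- step 3 : each `f ∈ D₁` has disconnected ends in `F ∪ D₁ \ {f}`
    have hD₁br : ∀ f ∈ D₁, ∀ (hp : (G.ends f).1 ∈ G.V) (hq : (G.ends f).2 ∈ G.V),
        ¬ EqvGen (GRel G (F ∪ D₁.erase f)) ⟨(G.ends f).1, hp⟩ ⟨(G.ends f).2, hq⟩ := by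
      intro f hfD₁ hp hq hcon
      refine hD₁minimal f hfD₁ ?_
      have hins : insert f (F ∪ D₁.erase f) = F ∪ D₁ := by
        rw [← Finset.union_insert, Finset.insert_erase hfD₁]
      refine (gconn_insert_iff G (F ∪ D₁.erase f) f ⟨(G.ends f).1, hp⟩ ⟨(G.ends f).2, hq⟩
        rfl hcon P Q).1 ?_
      rw [hins]
      exact hD₁conn
    -- step 4 : counting
    have hcount := gncomp_union_chain G D₁ F hD₁E hD₁br
    -- step 5 : the intermediate element
    set D₀ : Finset ℕ := insert e₁ D₁ with hD₀
    have hEc : G.E \ (a \ D₀) = insert e₁ (F ∪ D₁) := by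
      ext x
      simp only [Finset.mem_sdiff, Finset.mem_insert, Finset.mem_union, hF, hD₀,
        Finset.mem_sdiff]
      constructor
      · rintro ⟨hxE, hx⟩
        push_neg at hx
        by_cases hxa : x ∈ a
        · rcases hx hxa with rfl | h
          · exact Or.inl rfl
          · exact Or.inr (Or.inr h)
        · exact Or.inr (Or.inl ⟨hxE, hxa⟩)
      · rintro (rfl | ⟨hxE, hxa⟩ | hx)
        · exact ⟨he₁E, by tauto⟩
        · exact ⟨hxE, by tauto⟩
        · exact ⟨hD₁E hx, by tauto⟩
    have he₁FD₁ : e₁ ∉ F ∪ D₁ := by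
      rw [Finset.mem_union]
      rintro (h | h)
      · exact he₁F h
      · exact he₁D₁ h
    have hD₀a : D₀ ⊆ a := by
      intro x hx
      rcases Finset.mem_insert.1 hx with rfl | hx
      · exact he₁a
      · exact hD₁a hx
    refine ⟨a \ D₀, ?_, ?_, Finset.sdiff_subset, ?_, ?_⟩
    rotate_left
    · -- a' ⊆ a \ D₀
      intro x hx
      rw [Finset.mem_sdiff]
      refine ⟨hsub hx, fun hxD₀ => ?_⟩
      rcases Finset.mem_insert.1 hxD₀ with rfl | hxD₁
      · exact he₁a' hx
      · exact (Finset.mem_sdiff.1 (hD₁D hxD₁)).2 hx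
    · -- a \ D₀ ≠ a
      intro hcon
      have : e₁ ∈ a \ D₀ := hcon.symm ▸ he₁a
      exact (Finset.mem_sdiff.1 this).2 (Finset.mem_insert_self _ _)
    · -- genus computation
      have hn1 : G.ncomp G.V (G.E \ (a \ D₀)) = G.ncomp G.V (F ∪ D₁) := by
        rw [hEc]
        exact gncomp_insert_of_conn G (F ∪ D₁) e₁ P Q rfl hD₁conn
      have hcard : (G.E \ (a \ D₀)).card = F.card + D₁.card + 1 := by
        rw [hEc, Finset.card_insert_of_notMem he₁FD₁, Finset.card_union_of_disjoint]
        exact Finset.disjoint_left.2 fun x hx hx' => hD₁F x hx' hx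
      rw [subGenus_sdiff, subGenus_sdiff, hn1, hcard]
      have : (G.E \ a).card = F.card := by rw [hF]
      rw [this]
      push_cast
      have hc1 : (G.ncomp G.V (F ∪ D₁) : ℤ) + (D₁.card : ℤ)
          = (G.ncomp G.V F : ℤ) := by exact_mod_cast hcount
      have : (G.ncomp G.V (G.E \ a) : ℤ) = (G.ncomp G.V F : ℤ) := by rw [hF]
      rw [this]
      linarith
    · -- membership in `A⁰`
      refine ⟨Finset.sdiff_subset.trans haE, Or.inl ⟨rfl, ?_⟩⟩
      intro e heb
      obtain ⟨heEc, hlt⟩ := heb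
      have heE : e ∈ G.E := (Finset.mem_sdiff.1 heEc).1
      obtain ⟨hpe, hqe⟩ := G.ends_mem e heE
      -- it suffices to connect the ends of `e` in `(G − (a \ D₀)) − e`
      have hgoal : EqvGen (GRel G ((G.E \ (a \ D₀)).erase e))
          ⟨(G.ends e).1, hpe⟩ ⟨(G.ends e).2, hqe⟩ → False := by
        intro hcon
        have h1 : insert e ((G.E \ (a \ D₀)).erase e) = G.E \ (a \ D₀) :=
          Finset.insert_erase heEc
        have h2 := gncomp_insert_of_conn G ((G.E \ (a \ D₀)).erase e) e
          ⟨(G.ends e).1, hpe⟩ ⟨(G.ends e).2, hqe⟩ rfl hcon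
        rw [h1] at h2
        have h3 : G.E \ insert e (a \ D₀) = (G.E \ (a \ D₀)).erase e := by
          ext x
          simp only [Finset.mem_sdiff, Finset.mem_insert, Finset.mem_erase]
          tauto
        rw [h3] at hlt
        omega
      apply hgoal
      have hmemEc : e ∈ insert e₁ (F ∪ D₁) := by rw [← hEc]; exact heEc
      rcases Finset.mem_insert.1 hmemEc with rfl | hmem
      · -- e = e₁
        refine gconn_mono G ?_ hD₁conn
        intro x hx
        rw [Finset.mem_erase, hEc]
        constructor
        · rintro rfl; exact he₁FD₁ hx
        · exact Finset.mem_insert_of_mem hx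
      rcases Finset.mem_union.1 hmem with hmemF | hmemD₁
      · -- e ∈ F : use bridgelessness of `G − a`
        have hc := conn_of_not_bridge G a
          (by rw [← hF]; exact hmemF) (hbr e) ⟨(G.ends e).1, hpe⟩ ⟨(G.ends e).2, hqe⟩ rfl
        refine gconn_mono G ?_ hc
        intro x hx
        rw [Finset.mem_erase] at hx ⊢
        refine ⟨hx.1, ?_⟩
        rw [hEc]
        exact Finset.mem_insert_of_mem (Finset.mem_union_left _ hx.2)
      · -- e ∈ D₁ : cycle argument
        have hne' : ¬ EqvGen (GRel G (F ∪ D₁.erase e)) P Q := hD₁minimal e hmemD₁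
        have hins : insert e (F ∪ D₁.erase e) = F ∪ D₁ := by
          rw [← Finset.union_insert, Finset.insert_erase hmemD₁]
        have hPQ : EqvGen (GRel G (insert e (F ∪ D₁.erase e))) P Q := by
          rw [hins]; exact hD₁conn
        have hsub2 : insert e₁ (F ∪ D₁.erase e) ⊆ (G.E \ (a \ D₀)).erase e := by
          intro x hx
          rw [Finset.mem_erase, hEc]
          rcases Finset.mem_insert.1 hx with rfl | hx'
          · refine ⟨?_, Finset.mem_insert_self _ _⟩
            rintro rfl
            exact he₁D₁ hmemD₁
          · rcases Finset.mem_union.1 hx' with h | h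
            · refine ⟨?_, Finset.mem_insert_of_mem (Finset.mem_union_left _ h)⟩
              rintro rfl
              exact hD₁F _ hmemD₁ h
            · rw [Finset.mem_erase] at h
              exact ⟨h.1, Finset.mem_insert_of_mem (Finset.mem_union_right _ h.2)⟩
        have hstep : EqvGen (GRel G (insert e₁ (F ∪ D₁.erase e))) P Q :=
          EqvGen.rel _ _ ⟨e₁, Finset.mem_inter.2 ⟨Finset.mem_insert_self _ _, he₁E⟩,
            Or.inl rfl⟩
        rcases gconn_insert_cases G (F ∪ D₁.erase e) e
            ⟨(G.ends e).1, hpe⟩ ⟨(G.ends e).2, hqe⟩ rfl hPQ with h1 | ⟨h1, h2⟩ | ⟨h1, h2⟩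
        · exact absurd h1 hne'
        · -- P ~ Pe and Qe ~ Q in F ∪ D₁.erase e
          have hh1 : EqvGen (GRel G (insert e₁ (F ∪ D₁.erase e)))
              ⟨(G.ends e).1, hpe⟩ P :=
            gconn_mono G (Finset.subset_insert _ _) (EqvGen.symm _ _ h1)
          have hh2 : EqvGen (GRel G (insert e₁ (F ∪ D₁.erase e)))
              Q ⟨(G.ends e).2, hqe⟩ :=
            gconn_mono G (Finset.subset_insert _ _) (EqvGen.symm _ _ h2)
          exact gconn_mono G hsub2
            (EqvGen.trans _ _ _ (EqvGen.trans _ _ _ hh1 hstep) hh2)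
        · have hh1 : EqvGen (GRel G (insert e₁ (F ∪ D₁.erase e)))
              ⟨(G.ends e).1, hpe⟩ Q :=
            gconn_mono G (Finset.subset_insert _ _) h2
          have hh2 : EqvGen (GRel G (insert e₁ (F ∪ D₁.erase e)))
              P ⟨(G.ends e).2, hqe⟩ :=
            gconn_mono G (Finset.subset_insert _ _) h1
          exact gconn_mono G hsub2
            (EqvGen.trans _ _ _ (EqvGen.trans _ _ _ hh1 (EqvGen.symm _ _ hstep)) hh2)
  · -- b = 1 : connected case
    have hconn : G.ConnSub G.V (G.E \ a) := by
      rcases ha.2 with ⟨h, _⟩ | ⟨_, h⟩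
      · exact absurd h one_ne_zero
      · exact h
    set c : Finset ℕ := a.erase e₁ with hc
    have hEc : G.E \ c = insert e₁ (G.E \ a) := Finset.sdiff_erase he₁E
    have hconn' : G.ConnSub G.V (G.E \ c) := by
      have hup : G.ncomp G.V (G.E \ c) ≤ G.ncomp G.V (G.E \ a) :=
        gncomp_mono G (Finset.sdiff_subset_sdiff (Finset.Subset.refl _)
          (Finset.erase_subset e₁ a))
      have hlow : 0 < G.ncomp G.V (G.E \ c) := by
        rw [gncomp_eq]
        haveI : Nonempty (Quot (GRel G (G.E \ c))) := ⟨Quot.mk _ P⟩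
        exact Nat.card_pos
      have h1 : G.ncomp G.V (G.E \ a) = 1 := hconn
      unfold WGraph.ConnSub
      omega
    refine ⟨c, ⟨(Finset.erase_subset e₁ a).trans haE, Or.inr ⟨rfl, hconn'⟩⟩,
      Finset.subset_erase.2 ⟨hsub, he₁a'⟩, Finset.erase_subset e₁ a, ?_, ?_⟩
    · intro h
      exact (Finset.mem_erase.1 (h ▸ he₁a)).1 rfl
    · rw [subGenus_sdiff, subGenus_sdiff, hEc,
        Finset.card_insert_of_notMem he₁F]
      have h1 : G.ncomp G.V (G.E \ a) = 1 := hconn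
      have h2 : G.ncomp G.V (G.E \ c) = 1 := hconn'
      rw [hEc] at h2
      rw [h1, h2]
      push_cast
      ring

/-- For `b = 0, 1` (with `G` connected if `b = 1`), the set
`A^b_G`, ordered by reverse inclusion, is a graded poset with rank
`S ↦ g(G − S)`. -/
theorem Ab_graded_poset (G : WGraph) (b : ℕ) (hb : b = 0 ∨ b = 1)
    (hconn : b = 1 → G.Connected) :
    IsPartialOrderOn (G.Ab b) (fun S S' => S' ⊆ S) ∧
    IsRankOn (G.Ab b) (fun S S' => S' ⊆ S)
      (fun S => (G.subGenus G.V (G.E \ S)).toNat) := by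
  constructor
  · exact ⟨fun a _ => Finset.Subset.refl a,
      fun a b' c _ _ _ h1 h2 => h2.trans h1,
      fun a b' _ _ h1 h2 => Finset.Subset.antisymm h2 h1⟩
  · intro S S' hcov
    obtain ⟨hS, hS', hle, hneq, hmax⟩ := hcov
    obtain ⟨c, hcAb, hc1, hc2, hc3, hc4⟩ :=
      exists_step G b hb S S' hS hS' hle (fun h => hneq h.symm)
    rcases hmax c hcAb hc2 hc1 with h | h
    · exact absurd h hc3
    · rw [← h]
      show (G.subGenus G.V (G.E \ c)).toNat = (G.subGenus G.V (G.E \ S)).toNat + 1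
      have hnn := subGenus_sdiff_nonneg G S
      omega

end AbGradedInfra
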